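/- Fix real numbers α, β, integers 0 ≤ r ≤ K < N, and λ ∈ ℝ. Suppose the real numbers c_0, …, c_{K−r} satisfy, for every 0 ≤ j ≤ K−r, (2(r+j)(α−N) + βN)·c_j + (2√((r+j)(r+j+1)) − β)·m(r,j)·c_{j+1} + (2√((r+j)(r+j−1)) − β)·c_{j−1} = λ·c_j, with the conventions c_{−1} = 0 and c_{K−r+1} = 0. Then for every W ∈ W_r, the vertex function V = Σ_{j=0}^{K−r} c_j·A₊^{j}W satisfies Q_K(HBDO(Q_K V)) = λV. -/

import Mathlib

open Finset

/-- Outer adjacency operator on vertex functions of the Boolean hypercube `B_N`: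
`(A₊V)(S) = Σ_{s∈S} V(S∖{s})`. -/
def Aplus (N : ℕ) (V : Finset (Fin N) → ℝ) : Finset (Fin N) → ℝ :=
  fun S => ∑ s ∈ S, V (S.erase s)

/-- Inner adjacency operator: `(A₋V)(R) = Σ_{b∉R} V(R∪{b})`. -/
def Aminus (N : ℕ) (V : Finset (Fin N) → ℝ) : Finset (Fin N) → ℝ :=
  fun R => ∑ b ∈ Rᶜ, V (insert b R)

/-- Adjacency operator `A = A₊ + A₋`. -/
def Adj (N : ℕ) (V : Finset (Fin N) → ℝ) : Finset (Fin N) → ℝ :=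
  fun S => Aplus N V S + Aminus N V S

/-- Graph Laplacian `L = N·I − A`. -/
def Lap (N : ℕ) (V : Finset (Fin N) → ℝ) : Finset (Fin N) → ℝ :=
  fun S => (N : ℝ) * V S - Adj N V S

/-- Inner product `⟨V,U⟩ = Σ_S V(S)U(S)` on vertex functions. -/
def inner' (N : ℕ) (V U : Finset (Fin N) → ℝ) : ℝ :=
  ∑ S : Finset (Fin N), V S * U S

/-- `V` is supported on the Hamming sphere `Σ_r` (vanishes off sets of cardinality `r`). -/
def suppOn (N r : ℕ) (V : Finset (Fin N) → ℝ) : Prop :=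
  ∀ S : Finset (Fin N), S.card ≠ r → V S = 0

/-- Membership in `W_r`: supported on `Σ_r` and orthogonal to `A₊ℓ²(Σ_{r−1})`.
(For `r = 0` the orthogonality condition is vacuous, so `W_0 = ℓ²(Σ_0)`.) -/
def memW (N r : ℕ) (W : Finset (Fin N) → ℝ) : Prop :=
  suppOn N r W ∧
    ∀ U : Finset (Fin N) → ℝ, suppOn N (r - 1) U → inner' N W (Aplus N U) = 0

/-- `m(r,k) = Σ_{j=0}^{k} (N − 2(r+j))`. -/
def mcoef (N r k : ℕ) : ℝ :=
  ∑ j ∈ Finset.range (k + 1), ((N : ℝ) - 2 * ((r : ℝ) + (j : ℝ)))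

/-- Hadamard vector `H_S(R) = (−1)^{|R∩S|}`. -/
def Had (N : ℕ) (S R : Finset (Fin N)) : ℝ := (-1 : ℝ) ^ (R ∩ S).card

/-- Spatial truncation `Q_K`: restriction to the Hamming ball of radius `K`. -/
def QK (N K : ℕ) (V : Finset (Fin N) → ℝ) : Finset (Fin N) → ℝ :=
  fun S => if S.card ≤ K then V S else 0

/-- Spectral projection `P_K`: orthogonal projection onto `span{H_S : |S| ≤ K}`,
given by `P_K V = Σ_{|S|≤K} (⟨V,H_S⟩/2^N)·H_S`. -/
noncomputable def PK (N K : ℕ) (V : Finset (Fin N) → ℝ) : Finset (Fin N) → ℝ :=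
  fun R => ∑ S ∈ Finset.univ.filter (fun S : Finset (Fin N) => S.card ≤ K),
    (inner' N V (Had N S) / 2 ^ N) * Had N S R

/-- Diagonal operator `(TV)(R) = √(2|R|)·V(R)`. -/
noncomputable def Tdiag (N : ℕ) (V : Finset (Fin N) → ℝ) : Finset (Fin N) → ℝ :=
  fun R => Real.sqrt (2 * (R.card : ℝ)) * V R

/-- Boolean difference operator conjugated by the Hadamard transform:
`HBDO = T(αI − L)T + βL`. -/
noncomputable def HBDO (N : ℕ) (α β : ℝ) (V : Finset (Fin N) → ℝ) : Finset (Fin N) → ℝ :=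
  fun R => Tdiag N (fun S => α * Tdiag N V S - Lap N (Tdiag N V) S) R + β * Lap N V R

/-- Hadamard transform `(HV)(R) = Σ_S (−1)^{|R∩S|} V(S)`. -/
def Hmat (N : ℕ) (V : Finset (Fin N) → ℝ) : Finset (Fin N) → ℝ :=
  fun R => ∑ S : Finset (Fin N), Had N S R * V S

/-- Commutator `C = A₋A₊ − A₊A₋`. -/
def Cop (N : ℕ) (V : Finset (Fin N) → ℝ) : Finset (Fin N) → ℝ :=
  fun S => Aminus N (Aplus N V) S - Aplus N (Aminus N V) S

-- ### helper lemmas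

lemma suppOn_Aplus {N k : ℕ} {V : Finset (Fin N) → ℝ} (h : suppOn N k V) :
    suppOn N (k + 1) (Aplus N V) := by
  intro S hS
  refine Finset.sum_eq_zero fun s hs => h _ ?_
  have h1 : 1 ≤ S.card := Finset.card_pos.mpr ⟨s, hs⟩
  rw [Finset.card_erase_of_mem hs]
  omega

lemma suppOn_iter {N r : ℕ} {W : Finset (Fin N) → ℝ} (h : suppOn N r W) (j : ℕ) :
    suppOn N (r + j) ((Aplus N)^[j] W) := by
  induction j with
  | zero => simpa using h
  | succ j ih =>
      rw [Function.iterate_succ_apply']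
      exact (by omega : r + (j+1) = (r + j) + 1) ▸ suppOn_Aplus ih

lemma comm_AA {N : ℕ} (V : Finset (Fin N) → ℝ) (S : Finset (Fin N)) :
    Aminus N (Aplus N V) S = Aplus N (Aminus N V) S + ((N : ℝ) - 2 * S.card) * V S := by
  have hL : Aminus N (Aplus N V) S
      = ∑ b ∈ Sᶜ, (V S + ∑ s ∈ S, V (insert b (S.erase s))) := by
    refine Finset.sum_congr rfl fun b hb => ?_
    have hbS : b ∉ S := Finset.mem_compl.mp hb
    rw [show Aplus N V (insert b S) = ∑ s ∈ insert b S, V ((insert b S).erase s) from rfl,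
      Finset.sum_insert hbS, Finset.erase_insert hbS]
    congr 1
    refine Finset.sum_congr rfl fun s hs => ?_
    rw [Finset.erase_insert_of_ne ((ne_of_mem_of_not_mem hs hbS).symm)]
  have hR : Aplus N (Aminus N V) S
      = ∑ s ∈ S, (V S + ∑ b ∈ Sᶜ, V (insert b (S.erase s))) := by
    refine Finset.sum_congr rfl fun s hs => ?_
    rw [show Aminus N V (S.erase s) = ∑ b ∈ (S.erase s)ᶜ, V (insert b (S.erase s)) from rfl,
      Finset.compl_erase, Finset.sum_insert (by simp [hs]), Finset.insert_erase hs]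
  have hcard : (Sᶜ.card : ℝ) = (N : ℝ) - S.card := by
    have := Finset.card_compl S
    have h2 : S.card ≤ N := by simpa using Finset.card_le_univ S
    simp [this, Fintype.card_fin]
    push_cast [Nat.cast_sub h2]
    ring
  rw [hL, hR, Finset.sum_add_distrib, Finset.sum_add_distrib, Finset.sum_const,
    Finset.sum_const, Finset.sum_comm]
  simp only [nsmul_eq_mul]
  rw [hcard]
  ring

lemma adjoint {N : ℕ} (V U : Finset (Fin N) → ℝ) :
    inner' N V (Aplus N U) = inner' N (Aminus N V) U := by
  unfold inner' Aplus Aminus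
  simp only [Finset.mul_sum, Finset.sum_mul]
  rw [Finset.sum_sigma' Finset.univ (fun S => S) (fun S s => V S * U (S.erase s)),
    Finset.sum_sigma' Finset.univ (fun R => Rᶜ) (fun R b => V (insert b R) * U R)]
  refine Finset.sum_nbij' (fun p => ⟨p.1.erase p.2, p.2⟩) (fun p => ⟨insert p.2 p.1, p.2⟩)
    ?_ ?_ ?_ ?_ ?_
  · intro p hp; simp
  · intro p hp
    simp only [Finset.mem_sigma, Finset.mem_compl] at hp ⊢
    exact ⟨Finset.mem_univ _, Finset.mem_insert_self _ _⟩
  · intro p hp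
    simp only [Finset.mem_sigma, Finset.mem_compl] at hp
    exact Sigma.ext (by simp [Finset.insert_erase hp.2]) (by simp)
  · intro p hp
    simp only [Finset.mem_sigma, Finset.mem_compl] at hp
    exact Sigma.ext (by simp [Finset.erase_insert hp.2]) (by simp)
  · intro p hp
    simp only [Finset.mem_sigma] at hp
    rw [Finset.insert_erase hp.2]

lemma aminus_eq_zero {N r : ℕ} {W : Finset (Fin N) → ℝ} (hW : memW N r W) :
    Aminus N W = 0 := by
  obtain ⟨hsupp, horth⟩ := hW
  match r with
  | 0 =>
      funext S
      refine Finset.sum_eq_zero fun b hb => hsupp _ ?_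
      rw [Finset.card_insert_of_notMem (Finset.mem_compl.mp hb)]
      omega
  | (r+1) =>
      have hU : suppOn N r (Aminus N W) := by
        intro R hR
        refine Finset.sum_eq_zero fun b hb => hsupp _ ?_
        rw [Finset.card_insert_of_notMem (Finset.mem_compl.mp hb)]
        omega
      have h0 : inner' N (Aminus N W) (Aminus N W) = 0 := by
        rw [← adjoint]
        exact horth _ (by simpa using hU)
      funext S
      have : ∀ T ∈ (Finset.univ : Finset (Finset (Fin N))),
          0 ≤ Aminus N W T * Aminus N W T := fun T _ => mul_self_nonneg _
      have := (Finset.sum_eq_zero_iff_of_nonneg this).mp h0 S (Finset.mem_univ S)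
      have := mul_self_eq_zero.mp this
      simpa using this

lemma mcoef_zero (N r : ℕ) : mcoef N r 0 = (N : ℝ) - 2 * r := by
  simp [mcoef]

lemma mcoef_succ (N r k : ℕ) :
    mcoef N r (k + 1) = mcoef N r k + ((N : ℝ) - 2 * ((r : ℝ) + (k : ℝ) + 1)) := by
  rw [mcoef, Finset.sum_range_succ, ← mcoef]
  push_cast
  ring

lemma aplus_const_mul {N : ℕ} (t : ℝ) (X : Finset (Fin N) → ℝ) :
    Aplus N (fun T => t * X T) = fun T => t * Aplus N X T := by
  funext S; simp [Aplus, Finset.mul_sum]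

lemma lap_const_mul {N : ℕ} (t : ℝ) (X : Finset (Fin N) → ℝ) :
    Lap N (fun T => t * X T) = fun T => t * Lap N X T := by
  funext S
  simp only [Lap, Adj, Aplus, Aminus, ← Finset.mul_sum]
  ring

lemma supp_mul_eq {N k : ℕ} {X : Finset (Fin N) → ℝ} (h : suppOn N k X)
    (f : ℕ → ℝ) (S : Finset (Fin N)) : f S.card * X S = f k * X S := by
  rcases eq_or_ne S.card k with h' | h'
  · rw [h']
  · rw [h _ h', mul_zero, mul_zero]

lemma aminus_iter {N r : ℕ} {W : Finset (Fin N) → ℝ} (hs : suppOn N r W)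
    (h0 : Aminus N W = 0) (j : ℕ) :
    Aminus N ((Aplus N)^[j + 1] W) = fun S => mcoef N r j * (Aplus N)^[j] W S := by
  induction j with
  | zero =>
      funext S
      rw [Function.iterate_one, comm_AA, h0]
      have : Aplus N (0 : Finset (Fin N) → ℝ) S = 0 := by simp [Aplus]
      rw [this, zero_add, Function.iterate_zero_apply, mcoef_zero]
      have := supp_mul_eq hs (fun m => (N : ℝ) - 2 * m) S
      simpa using this
  | succ j ih =>
      funext S
      rw [Function.iterate_succ_apply' (Aplus N) (j+1) W, comm_AA, ih, aplus_const_mul]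
      have hsuc : suppOn N (r + (j+1)) ((Aplus N)^[j+1] W) := suppOn_iter hs (j+1)
      have h2 := supp_mul_eq hsuc (fun m => (N : ℝ) - 2 * m) S
      rw [h2, ← Function.iterate_succ_apply' (Aplus N) j W]
      push_cast
      rw [mcoef_succ]
      ring

lemma tdiag_supp {N k : ℕ} {X : Finset (Fin N) → ℝ} (h : suppOn N k X) :
    Tdiag N X = fun S => Real.sqrt (2 * (k : ℝ)) * X S := by
  funext S
  exact supp_mul_eq h (fun m => Real.sqrt (2 * (m : ℝ))) S

lemma qk_supp_le {N k K : ℕ} {X : Finset (Fin N) → ℝ} (h : suppOn N k X) (hk : k ≤ K) :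
    QK N K X = X := by
  funext S
  rw [QK]
  split
  · rfl
  · exact (h S (by omega)).symm

lemma qk_supp_gt {N k K : ℕ} {X : Finset (Fin N) → ℝ} (h : suppOn N k X) (hk : K < k) :
    QK N K X = 0 := by
  funext S
  rw [QK]
  split
  · exact h S (by omega)
  · rfl

def AplusL (N : ℕ) : (Finset (Fin N) → ℝ) →ₗ[ℝ] (Finset (Fin N) → ℝ) where
  toFun := Aplus N
  map_add' V U := by funext S; simp [Aplus, Finset.sum_add_distrib]
  map_smul' c V := by funext S; simp [Aplus, Finset.mul_sum]

def AminusL (N : ℕ) : (Finset (Fin N) → ℝ) →ₗ[ℝ] (Finset (Fin N) → ℝ) where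
  toFun := Aminus N
  map_add' V U := by funext S; simp [Aminus, Finset.sum_add_distrib]
  map_smul' c V := by funext S; simp [Aminus, Finset.mul_sum]

noncomputable def LapL (N : ℕ) : (Finset (Fin N) → ℝ) →ₗ[ℝ] (Finset (Fin N) → ℝ) :=
  (N : ℝ) • LinearMap.id - (AplusL N + AminusL N)

lemma lapL_eq {N : ℕ} (V : Finset (Fin N) → ℝ) : LapL N V = Lap N V := by
  funext S
  simp [LapL, Lap, Adj, AplusL, AminusL]

noncomputable def TdiagL (N : ℕ) : (Finset (Fin N) → ℝ) →ₗ[ℝ] (Finset (Fin N) → ℝ) where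
  toFun := Tdiag N
  map_add' V U := by funext S; simp [Tdiag]; ring
  map_smul' c V := by funext S; simp [Tdiag]; ring

noncomputable def HBDOL (N : ℕ) (α β : ℝ) :
    (Finset (Fin N) → ℝ) →ₗ[ℝ] (Finset (Fin N) → ℝ) :=
  TdiagL N ∘ₗ (α • TdiagL N - LapL N ∘ₗ TdiagL N) + β • LapL N

lemma hbdoL_eq {N : ℕ} (α β : ℝ) (V : Finset (Fin N) → ℝ) :
    HBDO N α β V = HBDOL N α β V := by
  funext S
  simp only [HBDO, HBDOL, LinearMap.add_apply, LinearMap.comp_apply, LinearMap.sub_apply,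
    LinearMap.smul_apply, Pi.add_apply, Pi.smul_apply, smul_eq_mul]
  rw [lapL_eq]
  congr 2

def QKL (N K : ℕ) : (Finset (Fin N) → ℝ) →ₗ[ℝ] (Finset (Fin N) → ℝ) where
  toFun := QK N K
  map_add' V U := by funext S; simp only [QK, Pi.add_apply]; split <;> simp
  map_smul' c V := by funext S; simp only [QK, Pi.smul_apply, RingHom.id_apply, smul_eq_mul]; split <;> simp

lemma sqrt_two_mul_mul (u v : ℝ) (hu : 0 ≤ u) (hv : 0 ≤ v) :
    Real.sqrt (2 * u) * Real.sqrt (2 * v) = 2 * Real.sqrt (u * v) := by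
  rw [← Real.sqrt_mul (by positivity), show (2*u)*(2*v) = 2^2*(u*v) by ring,
    Real.sqrt_mul (by positivity), Real.sqrt_sq (by norm_num)]

lemma key {N r : ℕ} {W : Finset (Fin N) → ℝ} (hs : suppOn N r W) (h0 : Aminus N W = 0)
    (α β : ℝ) (j : ℕ) :
    HBDO N α β ((Aplus N)^[j] W) = fun S =>
      (2*((r:ℝ)+(j:ℝ))*(α-(N:ℝ)) + β*(N:ℝ)) * (Aplus N)^[j] W S
      + (2*Real.sqrt (((r:ℝ)+(j:ℝ))*((r:ℝ)+(j:ℝ)+1)) - β) * (Aplus N)^[j+1] W S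
      + ((2*Real.sqrt (((r:ℝ)+(j:ℝ))*((r:ℝ)+(j:ℝ)-1)) - β)
          * (if j = 0 then 0 else mcoef N r (j-1))) * (Aplus N)^[j-1] W S := by
  have hA : Aminus N ((Aplus N)^[j] W)
      = fun T => (if j = 0 then 0 else mcoef N r (j-1)) * (Aplus N)^[j-1] W T := by
    cases j with
    | zero => simp only [if_pos rfl, zero_mul]; simpa [Pi.zero_def] using h0
    | succ jj => simpa using aminus_iter hs h0 jj
  have hLap : Lap N ((Aplus N)^[j] W) = fun T =>
      (N:ℝ) * (Aplus N)^[j] W T - ((Aplus N)^[j+1] W T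
        + (if j = 0 then 0 else mcoef N r (j-1)) * (Aplus N)^[j-1] W T) := by
    funext T
    show (N:ℝ) * _ - (Aplus N ((Aplus N)^[j] W) T + Aminus N ((Aplus N)^[j] W) T) = _
    rw [show Aplus N ((Aplus N)^[j] W) = (Aplus N)^[j+1] W
        from (Function.iterate_succ_apply' _ _ _).symm, hA]
  have hT : Tdiag N ((Aplus N)^[j] W)
      = fun T => Real.sqrt (2*((r+j : ℕ):ℝ)) * (Aplus N)^[j] W T :=
    tdiag_supp (suppOn_iter hs j)
  funext S
  show Tdiag N (fun T => α * Tdiag N ((Aplus N)^[j] W) T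
      - Lap N (Tdiag N ((Aplus N)^[j] W)) T) S + β * Lap N ((Aplus N)^[j] W) S = _
  rw [hT, lap_const_mul]
  show Real.sqrt (2*(S.card:ℝ)) * (α * (Real.sqrt (2*((r+j : ℕ):ℝ)) * (Aplus N)^[j] W S)
      - Real.sqrt (2*((r+j : ℕ):ℝ)) * Lap N ((Aplus N)^[j] W) S)
      + β * Lap N ((Aplus N)^[j] W) S = _
  rw [hLap]
  set mm : ℝ := if j = 0 then 0 else mcoef N r (j-1) with hmm
  set x := (Aplus N)^[j] W S
  set y := (Aplus N)^[j+1] W S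
  set z := (Aplus N)^[j-1] W S
  set a := Real.sqrt (2*(S.card:ℝ))
  set b := Real.sqrt (2*((r+j : ℕ):ℝ)) with hb
  set b1 := Real.sqrt (2*((r+j+1 : ℕ):ℝ)) with hb1
  set b2 := Real.sqrt (2*((r+(j-1) : ℕ):ℝ)) with hb2
  have e1 : a * x = b * x := supp_mul_eq (suppOn_iter hs j) (fun m => Real.sqrt (2*(m:ℝ))) S
  have e2 : a * y = b1 * y := supp_mul_eq (suppOn_iter hs (j+1)) (fun m => Real.sqrt (2*(m:ℝ))) S
  have e3 : a * z = b2 * z := supp_mul_eq (suppOn_iter hs (j-1)) (fun m => Real.sqrt (2*(m:ℝ))) S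
  have p1 : b * b = 2*((r:ℝ)+(j:ℝ)) := by
    rw [hb, Real.mul_self_sqrt (by positivity)]; push_cast; ring
  have p2 : b * b1 = 2*Real.sqrt (((r:ℝ)+(j:ℝ))*((r:ℝ)+(j:ℝ)+1)) := by
    rw [hb, hb1, show ((r+j : ℕ):ℝ) = (r:ℝ)+(j:ℝ) by push_cast; ring,
      show ((r+j+1 : ℕ):ℝ) = (r:ℝ)+(j:ℝ)+1 by push_cast; ring]
    exact sqrt_two_mul_mul _ _ (by positivity) (by positivity)
  have p3 : mm * (b * b2) = mm * (2*Real.sqrt (((r:ℝ)+(j:ℝ))*((r:ℝ)+(j:ℝ)-1))) := by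
    cases j with
    | zero => simp [hmm]
    | succ jj =>
        congr 1
        rw [hb, hb2, show ((r+(jj+1) : ℕ):ℝ) = (r:ℝ)+(jj:ℝ)+1 by push_cast; ring,
          show ((r+(jj+1-1) : ℕ):ℝ) = (r:ℝ)+(jj:ℝ) by push_cast; ring,
          sqrt_two_mul_mul _ _ (by positivity) (by positivity),
          show ((r:ℝ)+((jj+1 : ℕ):ℝ))*((r:ℝ)+((jj+1 : ℕ):ℝ)-1)
            = ((r:ℝ)+(jj:ℝ)+1)*((r:ℝ)+(jj:ℝ)) by push_cast; ring]
  linear_combination (α - (N:ℝ)) * b * e1 + b * e2 + mm * b * e3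
    + (α - (N:ℝ)) * x * p1 + y * p2 + z * p3

lemma qk_add {N K : ℕ} (X Y : Finset (Fin N) → ℝ) :
    QK N K (X + Y) = QK N K X + QK N K Y := by
  funext S; simp only [QK, Pi.add_apply]; split <;> simp

lemma qk_smul {N K : ℕ} (t : ℝ) (X : Finset (Fin N) → ℝ) :
    QK N K (t • X) = t • QK N K X := by
  funext S; simp only [QK, Pi.smul_apply, smul_eq_mul]; split <;> simp

noncomputable def Acoef (N : ℕ) (α β : ℝ) (r j : ℕ) : ℝ :=
  2*((r:ℝ)+(j:ℝ))*(α-(N:ℝ)) + β*(N:ℝ)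
noncomputable def Bcoef (r j : ℕ) (β : ℝ) : ℝ :=
  2*Real.sqrt (((r:ℝ)+(j:ℝ))*((r:ℝ)+(j:ℝ)+1)) - β
noncomputable def Ecoef (N r j : ℕ) (β : ℝ) : ℝ :=
  (2*Real.sqrt (((r:ℝ)+(j:ℝ))*((r:ℝ)+(j:ℝ)-1)) - β)
    * (if j = 0 then 0 else mcoef N r (j-1))

lemma key' {N r : ℕ} {W : Finset (Fin N) → ℝ} (hs : suppOn N r W) (h0 : Aminus N W = 0)
    (α β : ℝ) (j : ℕ) :
    HBDO N α β ((Aplus N)^[j] W)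
      = Acoef N α β r j • (Aplus N)^[j] W + Bcoef r j β • (Aplus N)^[j+1] W
        + Ecoef N r j β • (Aplus N)^[j-1] W := by
  rw [key hs h0 α β j]
  funext S
  simp only [Pi.add_apply, Pi.smul_apply, smul_eq_mul, Acoef, Bcoef, Ecoef]


/-- if `(c_0,…,c_{K−r})` satisfies the truncated tridiagonal eigenvector
equations (conventions `c_{−1} = 0`, `c_{K−r+1} = 0`), then for every `W ∈ W_r` the
vertex function `V = Σ_{j=0}^{K−r} c_j·A₊^{j}W` satisfies `Q_K(HBDO(Q_K V)) = λV`. -/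
theorem truncated_hbdo_eigenvector (N : ℕ) (hN : 1 ≤ N) (α β : ℝ) (r K : ℕ)
    (hrK : r ≤ K) (hK : K < N) (lam : ℝ)
    (c : ℕ → ℝ) (hc : ∀ j, K - r < j → c j = 0)
    (heig : ∀ j ≤ K - r,
      (2 * ((r : ℝ) + (j : ℝ)) * (α - (N : ℝ)) + β * (N : ℝ)) * c j
        + (2 * Real.sqrt (((r : ℝ) + (j : ℝ)) * ((r : ℝ) + (j : ℝ) + 1)) - β)
            * mcoef N r j * c (j + 1)
        + (2 * Real.sqrt (((r : ℝ) + (j : ℝ)) * ((r : ℝ) + (j : ℝ) - 1)) - β)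
            * (if j = 0 then 0 else c (j - 1))
      = lam * c j)
    (W : Finset (Fin N) → ℝ) (hW : memW N r W) :
    QK N K (HBDO N α β (QK N K (∑ j ∈ Finset.range (K - r + 1), c j • (Aplus N)^[j] W)))
      = lam • ∑ j ∈ Finset.range (K - r + 1), c j • (Aplus N)^[j] W := by
  have hsW := hW.1
  have h0 : Aminus N W = 0 := aminus_eq_zero hW
  have hsupp : ∀ j : ℕ, suppOn N (r + j) ((Aplus N)^[j] W) := suppOn_iter hsW
  set n := K - r with hn
  have hrn : r + n = K := by omega
  -- Step 1 : QK fixes the vector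
  have hQV : QK N K (∑ j ∈ Finset.range (n + 1), c j • (Aplus N)^[j] W)
      = ∑ j ∈ Finset.range (n + 1), c j • (Aplus N)^[j] W := by
    funext S
    rw [QK]
    split
    · rfl
    · next h =>
        symm
        rw [Finset.sum_apply]
        refine Finset.sum_eq_zero fun j hj => ?_
        have hj' : j ≤ n := by simpa [Nat.lt_succ_iff] using hj
        have : (Aplus N)^[j] W S = 0 := hsupp j S (by omega)
        simp [this]
  rw [hQV]
  -- Step 2 : push HBDO and QK through the sum
  have hlin : QK N K (HBDO N α β (∑ j ∈ Finset.range (n + 1), c j • (Aplus N)^[j] W))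
      = ∑ j ∈ Finset.range (n + 1), c j • QK N K (HBDO N α β ((Aplus N)^[j] W)) := by
    have h1 : HBDO N α β (∑ j ∈ Finset.range (n + 1), c j • (Aplus N)^[j] W)
        = ∑ j ∈ Finset.range (n + 1), c j • HBDO N α β ((Aplus N)^[j] W) := by
      simp only [hbdoL_eq]
      rw [map_sum]
      simp only [map_smul]
    rw [h1]
    rw [show QK N K = ⇑(QKL N K) from rfl, map_sum]
    simp only [map_smul]
  rw [hlin]
  -- Step 3 : evaluate QK ∘ HBDO on each sphere component
  have hQH : ∀ j ∈ Finset.range (n + 1),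
      QK N K (HBDO N α β ((Aplus N)^[j] W))
        = Acoef N α β r j • (Aplus N)^[j] W
          + (if j = n then (0 : Finset (Fin N) → ℝ) else Bcoef r j β • (Aplus N)^[j+1] W)
          + Ecoef N r j β • (Aplus N)^[j-1] W := by
    intro j hj
    have hj' : j ≤ n := by simpa [Nat.lt_succ_iff] using hj
    rw [key' hsW h0 α β j, qk_add, qk_add, qk_smul, qk_smul, qk_smul]
    rw [qk_supp_le (hsupp j) (by omega), qk_supp_le (hsupp (j-1)) (by omega)]
    congr 1
    congr 1
    by_cases hjn : j = n
    · rw [if_pos hjn, qk_supp_gt (hsupp (j+1)) (by omega), smul_zero]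
    · rw [if_neg hjn, qk_supp_le (hsupp (j+1)) (by omega)]
  have hstep3 : (∑ j ∈ Finset.range (n + 1), c j • QK N K (HBDO N α β ((Aplus N)^[j] W)))
      = ∑ j ∈ Finset.range (n + 1), c j •
          (Acoef N α β r j • (Aplus N)^[j] W
            + (if j = n then (0 : Finset (Fin N) → ℝ) else Bcoef r j β • (Aplus N)^[j+1] W)
            + Ecoef N r j β • (Aplus N)^[j-1] W) :=
    Finset.sum_congr rfl fun j hj => by rw [hQH j hj]
  rw [hstep3, Finset.smul_sum]
  simp only [smul_add, smul_smul]
  rw [Finset.sum_add_distrib, Finset.sum_add_distrib]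
  -- reindex the shifted sums
  have hT2 : (∑ j ∈ Finset.range (n + 1),
        c j • (if j = n then (0 : Finset (Fin N) → ℝ) else Bcoef r j β • (Aplus N)^[j+1] W))
      = ∑ j ∈ Finset.range (n + 1),
          (if j = 0 then (0:ℝ) else c (j-1) * Bcoef r (j-1) β) • (Aplus N)^[j] W := by
    have hmidA : (∑ j ∈ Finset.range (n + 1),
          c j • (if j = n then (0 : Finset (Fin N) → ℝ) else Bcoef r j β • (Aplus N)^[j+1] W))
        = ∑ i ∈ Finset.range n, (c i * Bcoef r i β) • (Aplus N)^[i+1] W := by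
      rw [Finset.sum_range_succ, if_pos rfl, smul_zero, add_zero]
      exact Finset.sum_congr rfl fun i hi =>
        by rw [if_neg (Finset.mem_range.mp hi).ne, smul_smul]
    have hmidB : (∑ j ∈ Finset.range (n + 1),
          (if j = 0 then (0:ℝ) else c (j-1) * Bcoef r (j-1) β) • (Aplus N)^[j] W)
        = ∑ i ∈ Finset.range n, (c i * Bcoef r i β) • (Aplus N)^[i+1] W := by
      rw [Finset.sum_range_succ']
      simp only [if_neg (Nat.succ_ne_zero _), Nat.add_sub_cancel]
      simp
    rw [hmidA, hmidB]
  have hT3 : (∑ j ∈ Finset.range (n + 1), (c j * Ecoef N r j β) • (Aplus N)^[j-1] W)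
      = ∑ j ∈ Finset.range (n + 1),
          (if j = n then (0:ℝ) else c (j+1) * Ecoef N r (j+1) β) • (Aplus N)^[j] W := by
    have hE0 : Ecoef N r 0 β = 0 := by simp [Ecoef]
    have hmidA : (∑ j ∈ Finset.range (n + 1), (c j * Ecoef N r j β) • (Aplus N)^[j-1] W)
        = ∑ i ∈ Finset.range n, (c (i+1) * Ecoef N r (i+1) β) • (Aplus N)^[i] W := by
      rw [Finset.sum_range_succ']
      simp only [hE0, mul_zero, zero_smul, add_zero, Nat.add_sub_cancel]
    have hmidB : (∑ j ∈ Finset.range (n + 1),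
          (if j = n then (0:ℝ) else c (j+1) * Ecoef N r (j+1) β) • (Aplus N)^[j] W)
        = ∑ i ∈ Finset.range n, (c (i+1) * Ecoef N r (i+1) β) • (Aplus N)^[i] W := by
      rw [Finset.sum_range_succ, if_pos rfl, zero_smul, add_zero]
      exact Finset.sum_congr rfl fun i hi =>
        by rw [if_neg (Finset.mem_range.mp hi).ne]
    rw [hmidA, hmidB]
  rw [hT2, hT3, ← Finset.sum_add_distrib, ← Finset.sum_add_distrib]
  refine Finset.sum_congr rfl fun j hj => ?_
  have hj' : j ≤ n := by simpa [Nat.lt_succ_iff] using hj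
  rw [← add_smul, ← add_smul]
  congr 1
  have q1 : (if j = 0 then (0:ℝ) else c (j-1) * Bcoef r (j-1) β)
      = (2*Real.sqrt (((r:ℝ)+(j:ℝ))*((r:ℝ)+(j:ℝ)-1)) - β) * (if j = 0 then 0 else c (j-1)) := by
    cases j with
    | zero => simp
    | succ jj =>
        rw [if_neg (Nat.succ_ne_zero jj), if_neg (Nat.succ_ne_zero jj), Nat.add_sub_cancel,
          Bcoef, show ((r:ℝ)+(jj:ℝ))*((r:ℝ)+(jj:ℝ)+1)
            = ((r:ℝ)+((jj+1 : ℕ):ℝ))*((r:ℝ)+((jj+1 : ℕ):ℝ)-1) by push_cast; ring]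
        ring
  have q2 : (if j = n then (0:ℝ) else c (j+1) * Ecoef N r (j+1) β)
      = (2*Real.sqrt (((r:ℝ)+(j:ℝ))*((r:ℝ)+(j:ℝ)+1)) - β) * mcoef N r j * c (j+1) := by
    by_cases hjn : j = n
    · rw [if_pos hjn, hc (j+1) (by omega), mul_zero]
    · rw [if_neg hjn, Ecoef, if_neg (Nat.succ_ne_zero j), Nat.add_sub_cancel,
        show ((r:ℝ)+((j+1 : ℕ):ℝ))*((r:ℝ)+((j+1 : ℕ):ℝ)-1)
          = ((r:ℝ)+(j:ℝ))*((r:ℝ)+(j:ℝ)+1) by push_cast; ring]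
      ring
  rw [q1, q2, Acoef]
  linear_combination heig j hj'
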